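/- For r ≥ 1 let n_r = 4^r and u_r = 1/(3 r^4 2^r), and define t_j = u_r for n_r < j ≤ n_{r+1} (r = 1, 2, …) and t_j = 0 for all integers j ≤ n_1 = 4 (in particular t_j = 0 for j ≤ 0). Then there exists a constant c > 0 such that for every r ≥ 1, ∑_{i∈ℤ} (∑_{k=1}^{n_{r+1}} t_{k−i})^2 ≥ c · n_{r+1}^2 / r^8; consequently, with σ_n^2 = ∑_{i∈ℤ} (∑_{k=1}^n t_{k−i})^2, there exists c' > 0 such that σ_n^2 ≥ c' n^2 / (log n)^8 for infinitely many n, so that σ_n^2 is not regularly varying of index 1. -/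

import Mathlib

open Filter Topology


section PeligradUtevAux

variable (t : ℤ → ℝ)

lemma PU_blk (j : ℤ) (hj : 5 ≤ j) : ∃ r : ℕ, 1 ≤ r ∧ (4:ℤ)^r < j ∧ j ≤ (4:ℤ)^(r+1) := by
  set m : ℕ := (j-1).toNat with hmdef
  have hm : (m : ℤ) = j - 1 := Int.toNat_of_nonneg (by omega)
  have hm4 : 4 ≤ m := by omega
  refine ⟨Nat.log 4 m, Nat.log_pos (by norm_num) hm4, ?_, ?_⟩
  · have h1 : 4 ^ Nat.log 4 m ≤ m := Nat.pow_log_le_self 4 (by omega)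
    have : ((4:ℤ))^(Nat.log 4 m) ≤ (m:ℤ) := by exact_mod_cast h1
    omega
  · have h2 : m < 4 ^ (Nat.log 4 m + 1) := Nat.lt_pow_succ_log_self (by norm_num) m
    have : (m:ℤ) < (4:ℤ)^(Nat.log 4 m + 1) := by exact_mod_cast h2
    omega

lemma PU_nat_le_pow (n : ℕ) : (n:ℤ) ≤ (4:ℤ)^(n+1) := by
  have h1 : n < 2 ^ n := Nat.lt_two_pow_self (n := n)
  have h2 : 2 ^ n ≤ 4 ^ (n+1) := by
    calc 2^n ≤ 4^n := Nat.pow_le_pow_left (by norm_num) n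
    _ ≤ 4^(n+1) := Nat.pow_le_pow_right (by norm_num) (by omega)
  exact_mod_cast (h1.le.trans h2)

variable (ht0 : ∀ j : ℤ, j ≤ 4 → t j = 0)
variable (htr : ∀ r : ℕ, 1 ≤ r → ∀ j : ℤ, (4 : ℤ) ^ r < j → j ≤ (4 : ℤ) ^ (r + 1) →
      t j = 1 / (3 * (r : ℝ) ^ 4 * 2 ^ r))

include ht0 htr in
lemma PU_tnn : ∀ j : ℤ, 0 ≤ t j := by
  intro j
  rcases le_or_gt j 4 with h | h
  · rw [ht0 j h]
  · obtain ⟨r, hr1, hrl, hru⟩ := PU_blk j (by omega)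
    rw [htr r hr1 j hrl hru]
    positivity

include htr in
lemma PU_blocksum (r : ℕ) (hr : 1 ≤ r) :
    ∑ j ∈ Finset.Ioc ((4:ℤ)^r) ((4:ℤ)^(r+1)), t j ^ 2 = 1/(3*(r:ℝ)^8) := by
  have hc : ∀ j ∈ Finset.Ioc ((4:ℤ)^r) ((4:ℤ)^(r+1)),
      t j ^ 2 = (1 / (3 * (r : ℝ) ^ 4 * 2 ^ r))^2 := by
    intro j hj
    rw [Finset.mem_Ioc] at hj
    rw [htr r hr j hj.1 hj.2]
  rw [Finset.sum_congr rfl hc, Finset.sum_const, Int.card_Ioc]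
  have h1 : ((4:ℤ)^(r+1) - (4:ℤ)^r) = 3 * 4^r := by ring
  have hcard : ((((4:ℤ)^(r+1) - (4:ℤ)^r).toNat : ℕ) : ℝ) = 3 * 4^r := by
    rw [h1]
    rw [show (3*4^r:ℤ) = ((3*4^r:ℕ):ℤ) by push_cast; ring, Int.toNat_natCast]
    push_cast
    ring
  rw [nsmul_eq_mul, hcard]
  have hr' : (0:ℝ) < (r:ℝ) := by exact_mod_cast hr
  have h2 : ((2:ℝ)^r)^2 = 4^r := by rw [← pow_mul, mul_comm, pow_mul]; norm_num
  have h4 : (0:ℝ) < 4^r := by positivity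
  field_simp
  rw [h2]

include htr in
lemma PU_partial_bound : ∀ R : ℕ, 1 ≤ R →
    ∑ j ∈ Finset.Ioc (4:ℤ) ((4:ℤ)^(R+1)), t j ^ 2 ≤ 2/3 - 1/(3*(R:ℝ)) := by
  intro R hR
  induction R, hR using Nat.le_induction with
  | base =>
    have e : Finset.Ioc (4:ℤ) ((4:ℤ)^(1+1)) = Finset.Ioc ((4:ℤ)^1) ((4:ℤ)^(1+1)) := by norm_num
    rw [e, PU_blocksum t htr 1 le_rfl]
    norm_num
  | succ R hR ih =>
    have hsplit : ∑ j ∈ Finset.Ioc (4:ℤ) ((4:ℤ)^(R+1)), t j ^ 2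
        + ∑ j ∈ Finset.Ioc ((4:ℤ)^(R+1)) ((4:ℤ)^(R+2)), t j ^ 2
        = ∑ j ∈ Finset.Ioc (4:ℤ) ((4:ℤ)^(R+2)), t j ^ 2 := by
      have hab : (4:ℤ) ≤ 4^(R+1) := by
        calc (4:ℤ) = 4^1 := by norm_num
          _ ≤ 4^(R+1) := pow_le_pow_right₀ (by norm_num) (by omega)
      have hbc : (4:ℤ)^(R+1) ≤ 4^(R+2) := pow_le_pow_right₀ (by norm_num) (by omega)
      have hdisj : Disjoint (Finset.Ioc (4:ℤ) (4^(R+1))) (Finset.Ioc ((4:ℤ)^(R+1)) (4^(R+2))) := by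
        rw [Finset.disjoint_left]
        intro x hx hy
        rw [Finset.mem_Ioc] at hx hy
        omega
      rw [← Finset.Ioc_union_Ioc_eq_Ioc hab hbc, Finset.sum_union hdisj]
    rw [← hsplit, PU_blocksum t htr (R+1) (by omega)]
    have hRpos : (0:ℝ) < (R:ℝ) := by exact_mod_cast hR
    have key : 1/(3*((R:ℝ)+1)^8) ≤ 1/(3*(R:ℝ)) - 1/(3*((R:ℝ)+1)) := by
      rw [div_sub_div _ _ (by positivity) (by positivity)]
      rw [div_le_div_iff₀ (by positivity) (by positivity)]
      have h7 : (R:ℝ) + 1 ≤ ((R:ℝ)+1)^7 := by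
        calc (R:ℝ)+1 = ((R:ℝ)+1)^1 := (pow_one _).symm
        _ ≤ ((R:ℝ)+1)^7 := pow_le_pow_right₀ (by linarith) (by norm_num)
      nlinarith [pow_pos (show (0:ℝ) < (R:ℝ)+1 by linarith) 8,
        pow_pos (show (0:ℝ) < (R:ℝ)+1 by linarith) 7,
        mul_le_mul_of_nonneg_left h7 (le_of_lt (pow_pos (show (0:ℝ) < (R:ℝ)+1 by linarith) 1))]
    push_cast
    linarith [ih]

include ht0 htr in
lemma PU_tsq_summable : Summable (fun j : ℤ => t j ^ 2) := by
  classical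
  apply summable_of_sum_le (c := 1) (fun j => sq_nonneg _)
  intro u
  set R : ℕ := (u.sup fun j => j.toNat) + 1 with hR
  have hfil : ∑ j ∈ u.filter (fun j => j ∈ Finset.Ioc (4:ℤ) ((4:ℤ)^(R+1))), t j ^ 2
      = ∑ j ∈ u, t j ^ 2 := by
    apply Finset.sum_filter_of_ne
    intro j hj hne
    rw [Finset.mem_Ioc]
    constructor
    · by_contra h
      exact hne (by rw [ht0 j (by omega)]; norm_num)
    · have h1 : j.toNat ≤ u.sup fun j => j.toNat := Finset.le_sup hj
      have h2 : (R:ℤ) ≤ (4:ℤ)^(R+1) := PU_nat_le_pow R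
      omega
  rw [← hfil]
  calc ∑ j ∈ u.filter (fun j => j ∈ Finset.Ioc (4:ℤ) ((4:ℤ)^(R+1))), t j ^ 2
      ≤ ∑ j ∈ Finset.Ioc (4:ℤ) ((4:ℤ)^(R+1)), t j ^ 2 := by
        apply Finset.sum_le_sum_of_subset_of_nonneg
        · intro x hx
          exact (Finset.mem_filter.mp hx).2
        · intro j _ _
          exact sq_nonneg _
    _ ≤ 2/3 - 1/(3*(R:ℝ)) := PU_partial_bound t htr R (by omega)
    _ ≤ 1 := by
        have hRpos : (0:ℝ) < (R:ℝ) := by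
          rw [hR]; push_cast; positivity
        have : 0 ≤ 1/(3*(R:ℝ)) := by positivity
        linarith

include ht0 htr in
lemma PU_S_summable (n : ℤ) :
    Summable (fun i : ℤ => (∑ k ∈ Finset.Icc (1:ℤ) n, t (k - i))^2) := by
  have h1 : ∀ k : ℤ, Summable (fun i : ℤ => t (k - i) ^ 2) :=
    fun k => (PU_tsq_summable t ht0 htr).comp_injective (sub_right_injective)
  have h2 : Summable (fun i : ℤ => ∑ k ∈ Finset.Icc (1:ℤ) n, t (k - i)^2) :=
    summable_sum (fun k _ => h1 k)
  apply Summable.of_nonneg_of_le (fun i => sq_nonneg _) _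
    (h2.mul_left ((Finset.Icc (1:ℤ) n).card : ℝ))
  intro i
  simpa using sq_sum_le_card_mul_sum_sq (s := Finset.Icc (1:ℤ) n) (f := fun k => t (k - i))

include ht0 htr in
lemma PU_lower (r : ℕ) (hr : 1 ≤ r) :
    (1/36:ℝ) * ((4 : ℝ) ^ (r + 1)) ^ 2 / (r : ℝ) ^ 8 ≤
      ∑' i : ℤ, (∑ k ∈ Finset.Icc (1 : ℤ) ((4:ℤ) ^ (r + 1)), t (k - i)) ^ 2 := by
  have hrpos : (0:ℝ) < (r:ℝ) := by exact_mod_cast hr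
  set u : ℝ := 1 / (3 * (r : ℝ) ^ 4 * 2 ^ r) with hu
  have hupos : 0 < u := by rw [hu]; positivity
  have hp4 : (0:ℤ) < 4^r := pow_pos (by norm_num) r
  have hp41 : (4:ℤ)^(r+1) = 4 * 4^r := by ring
  have key : ∀ i ∈ Finset.Icc (0:ℤ) ((4:ℤ)^r),
      2 * (4:ℝ)^r * u ≤ ∑ k ∈ Finset.Icc (1:ℤ) ((4:ℤ)^(r+1)), t (k - i) := by
    intro i hi
    rw [Finset.mem_Icc] at hi
    have hsub : Finset.Ioc ((4:ℤ)^r + i) ((4:ℤ)^(r+1)) ⊆ Finset.Icc (1:ℤ) ((4:ℤ)^(r+1)) := by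
      intro x hx
      rw [Finset.mem_Ioc] at hx
      rw [Finset.mem_Icc]
      omega
    have hstep : ∑ k ∈ Finset.Ioc ((4:ℤ)^r + i) ((4:ℤ)^(r+1)), t (k - i)
        ≤ ∑ k ∈ Finset.Icc (1:ℤ) ((4:ℤ)^(r+1)), t (k - i) :=
      Finset.sum_le_sum_of_subset_of_nonneg hsub (fun k _ _ => PU_tnn t ht0 htr _)
    have hval : ∀ k ∈ Finset.Ioc ((4:ℤ)^r + i) ((4:ℤ)^(r+1)), t (k - i) = u := by
      intro k hk
      rw [Finset.mem_Ioc] at hk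
      exact htr r hr (k - i) (by omega) (by omega)
    rw [Finset.sum_congr rfl hval, Finset.sum_const, Int.card_Ioc, nsmul_eq_mul] at hstep
    refine le_trans ?_ hstep
    apply mul_le_mul_of_nonneg_right _ hupos.le
    have h3 : (2 * (4:ℤ)^r) ≤ ((4:ℤ)^(r+1) - ((4:ℤ)^r + i)) := by omega
    have h4 : ((((4:ℤ)^(r+1) - ((4:ℤ)^r + i)).toNat : ℤ))
        = (4:ℤ)^(r+1) - ((4:ℤ)^r + i) := Int.toNat_of_nonneg (by omega)
    have h5 : (2 * (4:ℤ)^r : ℤ) ≤ ((((4:ℤ)^(r+1) - ((4:ℤ)^r + i)).toNat : ℤ)) := by omega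
    calc (2:ℝ) * 4^r = (((2 * (4:ℤ)^r : ℤ)):ℝ) := by push_cast; ring
      _ ≤ _ := by exact_mod_cast h5
  have hsum1 : ∑ i ∈ Finset.Icc (0:ℤ) ((4:ℤ)^r), (2*(4:ℝ)^r*u)^2
      ≤ ∑ i ∈ Finset.Icc (0:ℤ) ((4:ℤ)^r),
          (∑ k ∈ Finset.Icc (1:ℤ) ((4:ℤ)^(r+1)), t (k - i))^2 := by
    apply Finset.sum_le_sum
    intro i hi
    have h1 := key i hi
    have h2 : (0:ℝ) ≤ 2*(4:ℝ)^r*u := by positivity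
    exact pow_le_pow_left₀ h2 h1 2
  have hsum2 : ∑ i ∈ Finset.Icc (0:ℤ) ((4:ℤ)^r),
        (∑ k ∈ Finset.Icc (1:ℤ) ((4:ℤ)^(r+1)), t (k - i))^2
      ≤ ∑' i : ℤ, (∑ k ∈ Finset.Icc (1 : ℤ) ((4:ℤ) ^ (r + 1)), t (k - i)) ^ 2 :=
    Summable.sum_le_tsum _ (fun i _ => sq_nonneg _) (PU_S_summable t ht0 htr _)
  refine le_trans ?_ (le_trans hsum1 hsum2)
  rw [Finset.sum_const, nsmul_eq_mul, Int.card_Icc]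
  have hcard : ((4:ℝ))^r ≤ ((((4:ℤ)^r + 1 - 0).toNat : ℕ) : ℝ) := by
    have h4 : ((((4:ℤ)^r + 1 - 0).toNat : ℤ)) = (4:ℤ)^r + 1 - 0 := Int.toNat_of_nonneg (by omega)
    have : ((4:ℤ)^r) ≤ (((4:ℤ)^r + 1 - 0).toNat : ℤ) := by omega
    calc ((4:ℝ))^r = (((4:ℤ)^r : ℤ) : ℝ) := by push_cast; ring
      _ ≤ _ := by exact_mod_cast this
  have harith : (1/36:ℝ) * ((4 : ℝ) ^ (r + 1)) ^ 2 / (r : ℝ) ^ 8 = (4:ℝ)^r * (2*(4:ℝ)^r*u)^2 := by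
    rw [hu]
    have h2 : ((2:ℝ)^r)^2 = 4^r := by rw [← pow_mul, mul_comm, pow_mul]; norm_num
    have h4 : ((4:ℝ)^r)^2 = 16^r := by rw [← pow_mul, mul_comm, pow_mul]; norm_num
    have h44 : ((4:ℝ)^(r+1))^2 = 16 * 16^r := by
      rw [show ((4:ℝ)^(r+1))^2 = ((4:ℝ)^r)^2*16 by rw [pow_succ]; ring, h4]; ring
    have hr8 : ((r:ℝ)^4)^2 = (r:ℝ)^8 := by rw [← pow_mul]
    have hterm : (2*(4:ℝ)^r*(1 / (3 * (r : ℝ) ^ 4 * 2 ^ r)))^2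
        = 4*16^r/(9*(r:ℝ)^8*4^r) := by
      rw [mul_pow, mul_pow, div_pow, mul_pow, mul_pow, h2, h4, hr8]
      norm_num
      ring
    rw [h44, hterm]
    have h2r : ((4:ℝ)^r) ≠ 0 := by positivity
    field_simp
    ring
  rw [harith]
  exact mul_le_mul_of_nonneg_right hcard (sq_nonneg _)

end PeligradUtevAux

/-- Part (iv) of **Proposition 10** of Peligrad–Utev, "Invariance principle for stochastic
processes with short memory". With `n_r = 4^r`, `u_r = 1/(3 r⁴ 2^r)`, `t_j = u_r` for
`n_r < j ≤ n_{r+1}` and `t_j = 0` for `j ≤ 4`, the variance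
`σ_n² = ∑_{i∈ℤ} (∑_{k=1}^n t_{k−i})²` of the associated linear process satisfies
`σ_{n_{r+1}}² ≥ c n_{r+1}²/r⁸` for a positive constant `c`; consequently
`σ_n² ≥ c' n²/(log n)⁸` for infinitely many `n`, and `σ_n²` is not regularly varying of
index `1` (the ratio `σ_{[l·n]}²/σ_n²` does not tend to `l` for every `l > 0`). -/
theorem stmt16
    (t : ℤ → ℝ)
    (ht0 : ∀ j : ℤ, j ≤ 4 → t j = 0)
    (htr : ∀ r : ℕ, 1 ≤ r → ∀ j : ℤ, (4 : ℤ) ^ r < j → j ≤ (4 : ℤ) ^ (r + 1) →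
      t j = 1 / (3 * (r : ℝ) ^ 4 * 2 ^ r)) :
    (∃ c : ℝ, 0 < c ∧ ∀ r : ℕ, 1 ≤ r →
      c * ((4 : ℝ) ^ (r + 1)) ^ 2 / (r : ℝ) ^ 8 ≤
        ∑' i : ℤ, (∑ k ∈ Finset.Icc (1 : ℤ) (4 ^ (r + 1)), t (k - i)) ^ 2) ∧
    (∃ c' : ℝ, 0 < c' ∧ ∀ N : ℕ, ∃ n : ℕ, N ≤ n ∧
      c' * (n : ℝ) ^ 2 / Real.log n ^ 8 ≤
        ∑' i : ℤ, (∑ k ∈ Finset.Icc (1 : ℤ) (n : ℤ), t (k - i)) ^ 2) ∧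
    ¬ (∀ l : ℝ, 0 < l →
        Tendsto (fun n : ℕ =>
            (∑' i : ℤ, (∑ k ∈ Finset.Icc (1 : ℤ) ((⌊l * (n : ℝ)⌋₊ : ℤ)), t (k - i)) ^ 2) /
              (∑' i : ℤ, (∑ k ∈ Finset.Icc (1 : ℤ) (n : ℤ), t (k - i)) ^ 2))
          atTop (𝓝 l)) := by
  have hlower := PU_lower t ht0 htr
  -- the variance at `4^s` for natural `s ≥ 2`, as a function of naturals
  have hlowN : ∀ s : ℕ, 2 ≤ s →
      (1/36:ℝ) * ((4:ℝ)^s)^2 / ((s-1:ℕ):ℝ)^8 ≤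
        ∑' i : ℤ, (∑ k ∈ Finset.Icc (1:ℤ) (((4^s:ℕ):ℤ)), t (k - i)) ^ 2 := by
    intro s hs
    have h1 := hlower (s-1) (by omega)
    have hs1 : s - 1 + 1 = s := by omega
    rw [hs1] at h1
    have hc : ((4^s : ℕ) : ℤ) = (4:ℤ)^s := by push_cast; ring
    rw [hc]
    exact h1
  refine ⟨⟨1/36, by norm_num, hlower⟩, ?_, ?_⟩
  · -- part 2
    refine ⟨1/36, by norm_num, ?_⟩
    intro N
    refine ⟨4^(N+2), ?_, ?_⟩
    · have h1 : N < 2^N := Nat.lt_two_pow_self (n := N)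
      calc N ≤ 2^N := h1.le
        _ ≤ 4^(N+2) := by
          calc (2:ℕ)^N ≤ 4^N := Nat.pow_le_pow_left (by norm_num) N
            _ ≤ 4^(N+2) := Nat.pow_le_pow_right (by norm_num) (by omega)
    · have h1 := hlowN (N+2) (by omega)
      have hcR : ((4^(N+2) : ℕ) : ℝ) = (4:ℝ)^(N+2) := by push_cast; ring
      rw [hcR]
      refine le_trans ?_ h1
      -- compare denominators : (N+1)^8 ≤ (log (4^(N+2)))^8
      rw [Real.log_pow]
      have hlog4 : (1:ℝ) ≤ Real.log 4 := by
        rw [Real.le_log_iff_exp_le (by norm_num)]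
        calc Real.exp 1 ≤ 2.7182818286 := (Real.exp_one_lt_d9).le
          _ ≤ 4 := by norm_num
      have hden : (((N+2-1:ℕ)):ℝ)^8 ≤ (((N+2:ℕ):ℝ) * Real.log 4)^8 := by
        apply pow_le_pow_left₀ (by positivity)
        have e1 : ((N+2-1:ℕ):ℝ) = (N:ℝ)+1 := by
          rw [show N+2-1 = N+1 by omega]; push_cast; ring
        have e2 : ((N+2:ℕ):ℝ) = (N:ℝ)+2 := by push_cast; ring
        rw [e1, e2]
        nlinarith [Nat.cast_nonneg (α := ℝ) N]
      have hnum : (0:ℝ) ≤ 1/36 * ((4:ℝ)^(N+2))^2 := by positivity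
      have hposd : (0:ℝ) < (((N+2-1:ℕ)):ℝ)^8 := by
        rw [show N+2-1 = N+1 by omega]
        positivity
      rw [div_le_div_iff₀ (by positivity) hposd]
      exact mul_le_mul_of_nonneg_left hden hnum
  · -- part 3
    intro H
    set a : ℕ → ℝ :=
      fun n => ∑' i : ℤ, (∑ k ∈ Finset.Icc (1:ℤ) (n:ℤ), t (k - i)) ^ 2 with ha
    have hpos : ∀ s : ℕ, 2 ≤ s → 0 < a (4^s) := by
      intro s hs
      refine lt_of_lt_of_le ?_ (hlowN s hs)
      have h1 : (0:ℝ) < ((s-1:ℕ):ℝ) := by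
        have : 1 ≤ s - 1 := by omega
        exact_mod_cast Nat.lt_of_lt_of_le Nat.zero_lt_one this
      positivity
    have H4 := H 4 (by norm_num)
    have heq : (fun n : ℕ =>
          (∑' i : ℤ, (∑ k ∈ Finset.Icc (1 : ℤ) ((⌊(4:ℝ) * (n : ℝ)⌋₊ : ℤ)), t (k - i)) ^ 2) /
            (∑' i : ℤ, (∑ k ∈ Finset.Icc (1 : ℤ) (n : ℤ), t (k - i)) ^ 2))
        = fun n : ℕ => a (4*n) / a n := by
      funext n
      have hfl : ⌊(4:ℝ) * (n:ℝ)⌋₊ = 4*n := by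
        rw [show (4:ℝ)*(n:ℝ) = ((4*n : ℕ):ℝ) by push_cast; ring, Nat.floor_natCast]
      rw [hfl]
    rw [heq] at H4
    have hev : ∀ᶠ n in atTop, a (4*n)/a n < 5 :=
      H4.eventually_lt_const (by norm_num)
    obtain ⟨N, hN⟩ := eventually_atTop.mp hev
    set s0 : ℕ := max 2 N with hs0
    have hs02 : 2 ≤ s0 := le_max_left _ _
    have hs0N : ∀ s : ℕ, s0 ≤ s → N ≤ 4^s := by
      intro s hs
      calc N ≤ s0 := le_max_right _ _
        _ ≤ s := hs
        _ ≤ 2^s := (Nat.lt_two_pow_self (n := s)).le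
        _ ≤ 4^s := Nat.pow_le_pow_left (by norm_num) s
    set A : ℝ := a (4^s0) with hA
    have hApos : 0 < A := hpos s0 hs02
    have chain : ∀ m : ℕ, a (4^(s0+m)) ≤ 5^m * A := by
      intro m
      induction m with
      | zero => simp [hA]
      | succ m ih =>
        have hp := hpos (s0+m) (by omega)
        have hn := hN (4^(s0+m)) (hs0N (s0+m) (by omega))
        rw [div_lt_iff₀ hp] at hn
        have e : (4:ℕ)^(s0+(m+1)) = 4 * 4^(s0+m) := by ring
        rw [e]
        calc a (4 * 4^(s0+m)) ≤ 5 * a (4^(s0+m)) := hn.le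
          _ ≤ 5 * (5^m * A) := by nlinarith
          _ = 5^(m+1) * A := by ring
    -- derive `1 ≤ 36 A s^8 (5/16)^s` for every `s ≥ s0`
    have hineq : ∀ s : ℕ, s0 ≤ s → 1 ≤ 36*A*((s:ℕ):ℝ)^8*((5/16:ℝ))^s := by
      intro s hs
      set m : ℕ := s - s0 with hm
      have hsm : s0 + m = s := by omega
      have h1 := hlowN s (by omega)
      have h2 := chain m
      rw [hsm] at h2
      have hsq : ((4:ℝ)^s)^2 = 16^s := by rw [← pow_mul, mul_comm, pow_mul]; norm_num
      rw [hsq] at h1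
      have hc1pos : (0:ℝ) < ((s-1:ℕ):ℝ) := by
        have : 1 ≤ s - 1 := by omega
        exact_mod_cast Nat.lt_of_lt_of_le Nat.zero_lt_one this
      rw [div_le_iff₀ (by positivity)] at h1
      have h3 : (1/36:ℝ) * 16^s ≤ 5^m * A * ((s-1:ℕ):ℝ)^8 := le_trans h1
        (mul_le_mul_of_nonneg_right h2 (by positivity))
      have h4 : ((s-1:ℕ):ℝ)^8 ≤ ((s:ℕ):ℝ)^8 := by
        apply pow_le_pow_left₀ hc1pos.le
        exact_mod_cast Nat.sub_le s 1
      have h5 : (5:ℝ)^m ≤ 5^s := by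
        apply pow_le_pow_right₀ (by norm_num)
        omega
      have h6 : (1/36:ℝ) * 16^s ≤ 5^s * A * ((s:ℕ):ℝ)^8 := by
        calc (1/36:ℝ) * 16^s ≤ 5^m * A * ((s-1:ℕ):ℝ)^8 := h3
          _ ≤ 5^s * A * ((s:ℕ):ℝ)^8 := by
            apply mul_le_mul
            · exact mul_le_mul_of_nonneg_right h5 hApos.le
            · exact h4
            · positivity
            · positivity
      have h16 : (0:ℝ) < 16^s := by positivity
      rw [show ((5/16:ℝ))^s = 5^s/16^s by rw [div_pow]]
      rw [show (36:ℝ)*A*((s:ℕ):ℝ)^8*((5:ℝ)^s/16^s) = (36*A*((s:ℕ):ℝ)^8*5^s)/16^s by ring]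
      rw [le_div_iff₀ h16, one_mul]
      nlinarith
    -- contradiction with `s^8 (5/16)^s → 0`
    have hsum := summable_pow_mul_geometric_of_norm_lt_one (R := ℝ) 8
      (r := (5/16:ℝ)) (by rw [Real.norm_eq_abs, abs_of_pos (by norm_num)]; norm_num)
    have hlim := hsum.tendsto_atTop_zero
    have hev2 : ∀ᶠ s : ℕ in atTop, ((s:ℕ):ℝ)^8 * ((5/16:ℝ))^s < 1/(36*A) :=
      hlim.eventually_lt_const (by positivity)
    obtain ⟨M, hM⟩ := eventually_atTop.mp hev2
    have hfin := hineq (max s0 M) (le_max_left _ _)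
    have hsmall := hM (max s0 M) (le_max_right _ _)
    have : (36:ℝ)*A*((max s0 M : ℕ):ℝ)^8*((5/16:ℝ))^(max s0 M) < 1 := by
      have h36 : (0:ℝ) < 36*A := by positivity
      calc (36:ℝ)*A*((max s0 M : ℕ):ℝ)^8*((5/16:ℝ))^(max s0 M)
          = (36*A) * (((max s0 M : ℕ):ℝ)^8*((5/16:ℝ))^(max s0 M)) := by ring
        _ < (36*A) * (1/(36*A)) := by
            exact mul_lt_mul_of_pos_left hsmall h36
        _ = 1 := by field_simp
    linarith
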